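/- There exists a constant c > 0 and an infinite family of player-specific congestion games on circles with corresponding initial states such that the expected number of steps until the random best response dynamics started in the initial state reaches a Nash equilibrium is at least c·n^2, where n is the number of players. Concretely, for every even n ≥ 4 one may take the circle game in which all n players are of type 3 and the initial state in which players 0,…,n/2−1 play their 0-strategy and players n/2,…,n−1 play their 1-strategy. -/

import Mathlib

open scoped ENNReal NNReal

/-- A player-specific singleton congestion game on a circle with `n` players:
the resources are `0, …, n-1`, and player `i` chooses between resource `i`
(its 0-strategy, with delay function `d0 i`) and resource `i+1 (mod n)`
(its 1-strategy, with delay function `d1 i`). The delay functions are strictly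
increasing and ties are broken (for each player the delays of its two resources
at congestions `1 ≤ k ≤ n` are pairwise distinct). -/
structure CircleGame (n : ℕ) where
  d0 : Fin n → ℕ → ℕ
  d1 : Fin n → ℕ → ℕ
  mono0 : ∀ i, StrictMono (d0 i)
  mono1 : ∀ i, StrictMono (d1 i)
  tie : ∀ i : Fin n, ∀ k, 1 ≤ k → k ≤ n → ∀ k', 1 ≤ k' → k' ≤ n → d0 i k ≠ d1 i k'

namespace CircleGame

variable {n : ℕ} [NeZero n]

/-- A state is a function `s : Fin n → Bool`: `s i = false` iff player `i` plays its
0-strategy (resource `i`), and `s i = true` iff it plays its 1-strategy (resource `i+1`).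
`cong s r` is the congestion of resource `r`: resource `r` is allocated by player `r`
(if it plays its 0-strategy) and by player `r-1` (if it plays its 1-strategy). -/
def cong (s : Fin n → Bool) (r : Fin n) : ℕ :=
  (if s r = false then 1 else 0) + (if s (r - 1) = true then 1 else 0)

/-- The current resource of player `i` is a best response to state `s`. -/
def CurrentBR (G : CircleGame n) (s : Fin n → Bool) (i : Fin n) : Prop :=
  if s i = false then G.d0 i (cong s i) ≤ G.d1 i (cong s (i + 1) + 1)
  else G.d1 i (cong s (i + 1)) ≤ G.d0 i (cong s i + 1)

/-- One best-response step: a player whose current resource is not a best response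
switches to its (unique) other resource, which is then its best response. -/
def Step (G : CircleGame n) (s s' : Fin n → Bool) : Prop :=
  ∃ i, ¬ G.CurrentBR s i ∧ s' = Function.update s i (!(s i))

/-- Nash equilibrium: every player's current resource is a best response. -/
def IsNash (G : CircleGame n) (s : Fin n → Bool) : Prop := ∀ i, G.CurrentBR s i

/-- type 1 : `d_{r_i}(1) < d_{r_i}(2) < d_{r_{i+1}}(1) < d_{r_{i+1}}(2)`. -/
def IsType1 (G : CircleGame n) (i : Fin n) : Prop :=
  G.d0 i 1 < G.d0 i 2 ∧ G.d0 i 2 < G.d1 i 1 ∧ G.d1 i 1 < G.d1 i 2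

/-- type 1' : roles of the two resources exchanged. -/
def IsType1' (G : CircleGame n) (i : Fin n) : Prop :=
  G.d1 i 1 < G.d1 i 2 ∧ G.d1 i 2 < G.d0 i 1 ∧ G.d0 i 1 < G.d0 i 2

/-- type 2 : `d_{r_i}(1) < d_{r_{i+1}}(1) < d_{r_i}(2) < d_{r_{i+1}}(2)`. -/
def IsType2 (G : CircleGame n) (i : Fin n) : Prop :=
  G.d0 i 1 < G.d1 i 1 ∧ G.d1 i 1 < G.d0 i 2 ∧ G.d0 i 2 < G.d1 i 2

/-- type 2' : roles of the two resources exchanged. -/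
def IsType2' (G : CircleGame n) (i : Fin n) : Prop :=
  G.d1 i 1 < G.d0 i 1 ∧ G.d0 i 1 < G.d1 i 2 ∧ G.d1 i 2 < G.d0 i 2

/-- type 3 : `d_{r_i}(1) < d_{r_{i+1}}(1) < d_{r_{i+1}}(2) < d_{r_i}(2)`. -/
def IsType3 (G : CircleGame n) (i : Fin n) : Prop :=
  G.d0 i 1 < G.d1 i 1 ∧ G.d1 i 1 < G.d1 i 2 ∧ G.d1 i 2 < G.d0 i 2

/-- type 3' : roles of the two resources exchanged. -/
def IsType3' (G : CircleGame n) (i : Fin n) : Prop :=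
  G.d1 i 1 < G.d0 i 1 ∧ G.d0 i 1 < G.d0 i 2 ∧ G.d0 i 2 < G.d1 i 2

/-- Resource `r_i` is a termination point for overload tokens: the pair of types of
players `i-1` and `i` is one of `(2',2), (3,3'), (3,2), (2',3')`. -/
def OverloadTP (G : CircleGame n) (i : Fin n) : Prop :=
  (G.IsType2' (i - 1) ∧ G.IsType2 i) ∨ (G.IsType3 (i - 1) ∧ G.IsType3' i) ∨
  (G.IsType3 (i - 1) ∧ G.IsType2 i) ∨ (G.IsType2' (i - 1) ∧ G.IsType3' i)

/-- Resource `r_i` is a termination point for underload tokens: the pair of types of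
players `i-1` and `i` is one of `(2,2'), (3,3'), (2,3'), (3,2')`. -/
def UnderloadTP (G : CircleGame n) (i : Fin n) : Prop :=
  (G.IsType2 (i - 1) ∧ G.IsType2' i) ∨ (G.IsType3 (i - 1) ∧ G.IsType3' i) ∨
  (G.IsType2 (i - 1) ∧ G.IsType3' i) ∨ (G.IsType3 (i - 1) ∧ G.IsType2' i)

open scoped Classical in
/-- The set of players whose current resource is not a best response. -/
noncomputable def unsat (G : CircleGame n) (s : Fin n → Bool) : Finset (Fin n) :=
  Finset.univ.filter fun i => ¬ G.CurrentBR s i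

/-- One step of the random best response dynamics: in a state that is not a Nash
equilibrium, a player whose current resource is not a best response is selected
uniformly at random and switches to its best response; Nash equilibria are absorbing. -/
noncomputable def stepPMF (G : CircleGame n) (s : Fin n → Bool) : PMF (Fin n → Bool) :=
  if h : (G.unsat s).Nonempty then
    (PMF.uniformOfFinset (G.unsat s) h).bind fun i => PMF.pure (Function.update s i (!(s i)))
  else PMF.pure s

/-- The distribution of the random best response dynamics after `t` steps, started in `s`. -/
noncomputable def walk (G : CircleGame n) (s : Fin n → Bool) : ℕ → PMF (Fin n → Bool)
  | 0 => PMF.pure s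
  | t + 1 => (walk G s t).bind G.stepPMF

open scoped Classical in
/-- The expected number of steps until the random best response dynamics started in `s`
reaches a Nash equilibrium: since Nash equilibria are absorbing, this is
`∑_{t ≥ 0} Pr[X_t is not a Nash equilibrium]`. -/
noncomputable def expTime (G : CircleGame n) (s : Fin n → Bool) : ℝ≥0∞ :=
  ∑' t : ℕ, ∑ s' ∈ Finset.univ.filter (fun s' => ¬ G.IsNash s'), G.walk s t s'

end CircleGame



namespace CirclePf

open CircleGame Finset
open scoped Classical

variable {n : ℕ} [NeZero n]

lemma mod_helper (n a : ℕ) (h : a < 2 * n) : a % n = if a < n then a else a - n := by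
  split
  · exact Nat.mod_eq_of_lt ‹_›
  · rw [Nat.mod_eq_sub_mod (by omega)]; exact Nat.mod_eq_of_lt (by omega)

lemma fin_sub_one (h : 2 ≤ n) (y : Fin n) :
    ((y - 1 : Fin n) : ℕ) = if (y:ℕ) = 0 then n - 1 else (y:ℕ) - 1 := by
  have h1 : ((1:Fin n):ℕ) = 1 := Nat.mod_eq_of_lt h
  have hy := y.isLt
  rw [Fin.sub_def]
  simp only [h1, Fin.val_mk]
  rw [mod_helper n _ (by omega)]
  split <;> split <;> omega

lemma fin_add_one (y : Fin n) :
    ((y + 1 : Fin n) : ℕ) = if (y:ℕ) = n - 1 then 0 else (y:ℕ) + 1 := by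
  have hn := Nat.pos_of_ne_zero (NeZero.ne n)
  have hy := y.isLt
  rcases eq_or_lt_of_le (show 1 ≤ n by omega) with h1 | h2
  · have : (y:ℕ) = 0 := by omega
    rw [Fin.add_def]
    simp only [Fin.val_mk]
    rw [mod_helper n _ (by omega)]
    split <;> split <;> omega
  · have h1 : ((1:Fin n):ℕ) = 1 := Nat.mod_eq_of_lt h2
    rw [Fin.add_def]
    simp only [h1, Fin.val_mk]
    rw [mod_helper n _ (by omega)]
    split <;> split <;> omega

/-- The reachable states: players `i` with `(i - o) mod n < g` play their 0-strategy. -/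
def st (o : Fin n) (g : ℕ) : Fin n → Bool := fun i => decide (g ≤ ((i - o : Fin n) : ℕ))

lemma hn2 (hg1 : 1 ≤ g) (hg2 : g ≤ n - 1) : 2 ≤ n := by
  have := Nat.pos_of_ne_zero (NeZero.ne n); omega

lemma cong_st (o : Fin n) (g : ℕ) (hg1 : 1 ≤ g) (hg2 : g ≤ n - 1) (r : Fin n) :
    cong (st o g) r =
      if ((r - o : Fin n):ℕ) = 0 then 2
      else if ((r - o : Fin n):ℕ) < g then 1
      else if ((r - o : Fin n):ℕ) = g then 0 else 1 := by
  have hn : 2 ≤ n := hn2 hg1 hg2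
  have hx := (r - o).isLt
  have hsub : ((r - 1 - o : Fin n) : ℕ)
      = if ((r - o : Fin n):ℕ) = 0 then n - 1 else ((r - o : Fin n):ℕ) - 1 := by
    rw [sub_right_comm]
    exact fin_sub_one hn (r - o)
  unfold cong st
  rw [hsub]
  simp only [decide_eq_false_iff_not, decide_eq_true_eq, not_le]
  split_ifs <;> omega

lemma currentBR_st_iff (G : CircleGame n) (hG : ∀ i, G.IsType3 i) (o : Fin n) (g : ℕ)
    (hg1 : 1 ≤ g) (hg2 : g ≤ n - 1) (i : Fin n) :
    ¬ G.CurrentBR (st o g) i ↔ (((i - o : Fin n):ℕ) = 0 ∨ ((i - o : Fin n):ℕ) = g) := by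
  obtain ⟨h01, h12, h22⟩ := hG i
  have hn : 2 ≤ n := hn2 hg1 hg2
  have hx := (i - o).isLt
  have hadd : ((i + 1 - o : Fin n):ℕ)
      = if ((i - o : Fin n):ℕ) = n - 1 then 0 else ((i - o : Fin n):ℕ) + 1 := by
    rw [show i + 1 - o = (i - o) + 1 by rw [sub_add_eq_add_sub]]
    exact fin_add_one (i - o)
  have hmono : G.d1 i 2 < G.d1 i 3 := G.mono1 i (by omega)
  unfold CurrentBR
  rcases eq_or_ne ((i - o : Fin n):ℕ) (n-1) with hxe | hxe
  · have hadd0 : ((i + 1 - o : Fin n):ℕ) = 0 := by rw [hadd, if_pos hxe]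
    rw [cong_st o g hg1 hg2 i, cong_st o g hg1 hg2 (i+1), hadd0]
    unfold st
    simp only [decide_eq_false_iff_not, not_le]
    split_ifs <;> first | exact absurd rfl (by omega) | exact ‹False›.elim | omega | (simp only [Nat.reduceAdd]; omega)
  · have haddx : ((i + 1 - o : Fin n):ℕ) = ((i - o : Fin n):ℕ) + 1 := by
      rw [hadd, if_neg hxe]
    rw [cong_st o g hg1 hg2 i, cong_st o g hg1 hg2 (i+1), haddx]
    unfold st
    simp only [decide_eq_false_iff_not, not_le]
    split_ifs <;> first | exact absurd rfl (by omega) | exact ‹False›.elim | omega | (simp only [Nat.reduceAdd]; omega)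

lemma sub_val_eq_zero_iff {o i : Fin n} : ((i - o : Fin n):ℕ) = 0 ↔ i = o := by
  constructor
  · intro h
    have h0 : i - o = 0 := Fin.ext (by simp [h])
    exact sub_eq_zero.mp h0
  · rintro rfl
    simp

lemma unsat_st (G : CircleGame n) (hG : ∀ i, G.IsType3 i) (o : Fin n) (g : ℕ)
    (hg1 : 1 ≤ g) (hg2 : g ≤ n - 1) (hlt : g < n) :
    G.unsat (st o g) = {o, o + ⟨g, hlt⟩} := by
  classical
  have hval : ∀ i : Fin n, ((i - o : Fin n):ℕ) = g ↔ i = o + ⟨g, hlt⟩ := by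
    intro i
    constructor
    · intro h
      have : i - o = ⟨g, hlt⟩ := Fin.ext h
      rw [← this, add_sub_cancel]
    · intro h
      rw [h, add_sub_cancel_left]
  ext i
  simp only [unsat, mem_filter, mem_univ, true_and, mem_insert, mem_singleton,
    currentBR_st_iff G hG o g hg1 hg2 i, sub_val_eq_zero_iff, hval]

lemma update_at_o (o : Fin n) (g : ℕ) (hg1 : 1 ≤ g) (hg2 : g ≤ n - 1) :
    Function.update (st o g) o (!(st o g o)) = st (o + 1) (g - 1) := by
  have hn : 2 ≤ n := hn2 hg1 hg2
  funext i
  rcases eq_or_ne i o with rfl | hne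
  · rw [Function.update_self]
    have h1 : st i g i = false := by
      simp [st, sub_self]; omega
    have h2 : ((i - (i + 1) : Fin n) : ℕ) = n - 1 := by
      rw [show i - (i + 1) = (i - i) - 1 by rw [sub_add_eq_sub_sub], sub_self,
        fin_sub_one hn 0]
      simp
    rw [h1]
    simp only [st, h2]
    have : g - 1 ≤ n - 1 := by omega
    simp [this]
  · rw [Function.update_of_ne hne]
    have hvx : ((i - o : Fin n):ℕ) ≠ 0 := fun h => hne (sub_val_eq_zero_iff.mp h)
    have hlt := (i - o).isLt
    have h3 : i - (o + 1) = (i - o) - 1 := by rw [sub_add_eq_sub_sub]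
    unfold st
    simp only [h3, fin_sub_one hn (i - o), if_neg hvx]
    exact decide_eq_decide.mpr (by omega)

lemma update_at_u (o : Fin n) (g : ℕ) (hg1 : 1 ≤ g) (hg2 : g ≤ n - 1) (hlt : g < n) :
    Function.update (st o g) (o + ⟨g, hlt⟩) (!(st o g (o + ⟨g, hlt⟩))) = st o (g + 1) := by
  funext i
  have hu : ((o + ⟨g, hlt⟩ - o : Fin n) : ℕ) = g := by rw [add_sub_cancel_left]
  rcases eq_or_ne i (o + ⟨g, hlt⟩) with rfl | hne
  · rw [Function.update_self]
    have h1 : st o g (o + ⟨g, hlt⟩) = true := by simp [st, hu]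
    rw [h1]
    show false = st o (g + 1) (o + ⟨g, hlt⟩)
    unfold st
    rw [hu]
    simp
  · rw [Function.update_of_ne hne]
    have hvx : ((i - o : Fin n):ℕ) ≠ g := by
      intro h
      apply hne
      have h0 : i - o = ⟨g, hlt⟩ := Fin.ext (by simpa using h)
      rw [← h0, add_sub_cancel]
    show st o g i = st o (g + 1) i
    unfold st
    exact decide_eq_decide.mpr (by omega)

lemma isNash_of_cong_one (G : CircleGame n) (hG : ∀ i, G.IsType3 i) (s : Fin n → Bool)
    (h : ∀ r, cong s r = 1) : G.IsNash s := by
  intro i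
  obtain ⟨h01, h12, h22⟩ := hG i
  unfold CurrentBR
  rcases Bool.eq_false_or_eq_true (s i) with hsi | hsi
  · rw [if_neg (by simp [hsi]), h i, h (i+1)]
    exact le_of_lt (h12.trans h22)
  · rw [if_pos hsi, h i, h (i+1)]
    exact le_of_lt (h01.trans h12)

lemma cong_st_zero (o : Fin n) (r : Fin n) : cong (st o 0) r = 1 := by
  simp [cong, st]

lemma cong_st_n (o : Fin n) (r : Fin n) : cong (st o n) r = 1 := by
  have h1 := (r - o).isLt
  have h2 := (r - 1 - o).isLt
  simp [cong, st, Nat.not_le.mpr h1, Nat.not_le.mpr h2, not_le]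

/-- The set of reachable states. -/
def Reach (s : Fin n → Bool) : Prop := ∃ o : Fin n, ∃ g, g ≤ n ∧ s = st o g

lemma reach_cases (G : CircleGame n) (hG : ∀ i, G.IsType3 i) (s : Fin n → Bool)
    (hs : Reach s) (hnash : ¬ G.IsNash s) :
    ∃ o : Fin n, ∃ g, 1 ≤ g ∧ g ≤ n - 1 ∧ s = st o g := by
  obtain ⟨o, g, hg, rfl⟩ := hs
  refine ⟨o, g, ?_, ?_, rfl⟩
  · rcases Nat.eq_zero_or_pos g with rfl | h
    · exact absurd (isNash_of_cong_one G hG _ (cong_st_zero o)) hnash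
    · exact h
  · rcases eq_or_lt_of_le hg with rfl | h
    · exact absurd (isNash_of_cong_one G hG _ (cong_st_n o)) hnash
    · omega

lemma stepPMF_of_nash (G : CircleGame n) (s : Fin n → Bool) (h : G.IsNash s) :
    G.stepPMF s = PMF.pure s := by
  have he : G.unsat s = ∅ := by
    ext i
    simp only [unsat, mem_filter, mem_univ, true_and, Finset.notMem_empty, iff_false, not_not]
    exact h i
  unfold stepPMF
  rw [dif_neg (by rw [he]; exact Finset.not_nonempty_empty)]

lemma tsum_bind {α β : Type*} (p : PMF α) (q : α → PMF β) (f : β → ℝ≥0∞) :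
    ∑' b, (p.bind q) b * f b = ∑' a, p a * ∑' b, (q a) b * f b := by
  calc ∑' b, (p.bind q) b * f b
      = ∑' b, ∑' a, p a * (q a) b * f b := by
        refine tsum_congr fun b => ?_
        rw [PMF.bind_apply, ← ENNReal.tsum_mul_right]
    _ = ∑' a, ∑' b, p a * (q a) b * f b := ENNReal.tsum_comm
    _ = ∑' a, p a * ∑' b, (q a) b * f b := by
        refine tsum_congr fun a => ?_
        rw [← ENNReal.tsum_mul_left]
        exact tsum_congr fun b => mul_assoc _ _ _

lemma tsum_pure {α : Type*} (a : α) (f : α → ℝ≥0∞) :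
    ∑' b, (PMF.pure a) b * f b = f a := by
  rw [tsum_eq_single a]
  · simp [PMF.pure_apply]
  · intro b hb; simp [PMF.pure_apply, hb]

lemma tsum_uniform_pair {α : Type*} [DecidableEq α] (a b : α) (hab : a ≠ b)
    (hne : ({a, b} : Finset α).Nonempty) (h : α → ℝ≥0∞) :
    ∑' i, (PMF.uniformOfFinset ({a,b} : Finset α) hne) i * h i = 2⁻¹ * h a + 2⁻¹ * h b := by
  rw [tsum_eq_sum (s := ({a, b} : Finset α))
    (fun i hi => by simp [PMF.uniformOfFinset_apply, hi])]
  rw [Finset.sum_pair hab]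
  simp [PMF.uniformOfFinset_apply, Finset.card_pair hab]

lemma tsum_stepPMF (G : CircleGame n) (s : Fin n → Bool) (a b : Fin n) (hab : a ≠ b)
    (h : G.unsat s = {a, b}) (f : (Fin n → Bool) → ℝ≥0∞) :
    ∑' s', G.stepPMF s s' * f s'
      = 2⁻¹ * f (Function.update s a (!(s a))) + 2⁻¹ * f (Function.update s b (!(s b))) := by
  classical
  have hne : (G.unsat s).Nonempty := by rw [h]; exact ⟨a, by simp⟩
  unfold stepPMF
  rw [dif_pos hne, tsum_bind]
  have : ∀ i, (∑' s', (PMF.pure (Function.update s i (!(s i)))) s' * f s')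
      = f (Function.update s i (!(s i))) := fun i => tsum_pure _ f
  simp only [this]
  have hne' : ({a, b} : Finset (Fin n)).Nonempty := ⟨a, by simp⟩
  calc ∑' i, (PMF.uniformOfFinset (G.unsat s) hne) i * f (Function.update s i (!(s i)))
      = ∑' i, (PMF.uniformOfFinset ({a,b} : Finset (Fin n)) hne') i
          * f (Function.update s i (!(s i))) := by
        refine tsum_congr fun i => ?_
        congr 1
        simp [PMF.uniformOfFinset_apply, h]
    _ = _ := tsum_uniform_pair a b hab hne' _

/-- The potential function. -/
def fN (s : Fin n → Bool) : ℕ :=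
  (univ.filter fun i => s i = true).card * (n - (univ.filter fun i => s i = true).card)

open Fin.NatCast in
lemma card_true_st (o : Fin n) (g : ℕ) :
    (univ.filter fun i => st o g i = true).card = n - g := by
  classical
  rw [show n - g = (Finset.Ico g n).card by rw [Nat.card_Ico]]
  apply Finset.card_nbij' (fun i => ((i - o : Fin n) : ℕ)) (fun m => o + (m : Fin n))
  · intro i hi
    simp only [Finset.mem_coe, mem_filter, st, decide_eq_true_eq] at hi
    exact Finset.mem_Ico.mpr ⟨hi.2, (i - o).isLt⟩
  · intro m hm
    obtain ⟨hm1, hm2⟩ := Finset.mem_Ico.mp hm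
    simp only [Finset.mem_coe, mem_filter, mem_univ, true_and, st, decide_eq_true_eq, add_sub_cancel_left]
    rw [Fin.val_cast_of_lt hm2]
    exact hm1
  · intro i _
    show o + (((i - o : Fin n) : ℕ) : Fin n) = i
    rw [Fin.cast_val_eq_self (i - o), add_comm]
    exact sub_add_cancel i o
  · intro m hm
    obtain ⟨hm1, hm2⟩ := Finset.mem_Ico.mp hm
    show ((o + (m : Fin n) - o : Fin n) : ℕ) = m
    rw [add_sub_cancel_left]
    exact Fin.val_cast_of_lt hm2

lemma fN_st (o : Fin n) (g : ℕ) (hg : g ≤ n) : fN (st o g) = (n - g) * g := by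
  rw [fN, card_true_st]
  congr 1
  omega

lemma fN_le (m : ℕ) (hn : n = m + m) (s : Fin n → Bool) : fN s ≤ m * m := by
  set k := (univ.filter fun i => s i = true).card with hk
  have hkn : k ≤ n := by
    calc k ≤ (univ : Finset (Fin n)).card := Finset.card_le_card (Finset.filter_subset _ _)
    _ = n := by simp
  rw [fN, ← hk]
  zify [hkn]
  nlinarith [sq_nonneg ((k : ℤ) - m)]

lemma reach_nash_fN (G : CircleGame n) (hG : ∀ i, G.IsType3 i) (s : Fin n → Bool)
    (hs : Reach s) (hnash : G.IsNash s) : fN s = 0 := by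
  obtain ⟨o, g, hg, rfl⟩ := hs
  rcases Nat.eq_zero_or_pos g with rfl | h1
  · rw [fN_st o 0 (by omega)]; simp
  rcases eq_or_lt_of_le hg with rfl | h2
  · rw [fN_st o g le_rfl]; simp
  exfalso
  have := (currentBR_st_iff G hG o g h1 (by omega) o).mpr (Or.inl (by rw [sub_val_eq_zero_iff]))
  exact this (hnash o)

lemma drift (G : CircleGame n) (hG : ∀ i, G.IsType3 i) (s : Fin n → Bool) (hs : Reach s) :
    (fN s : ℝ≥0∞) ≤ (∑' s', G.stepPMF s s' * fN s') + (if G.IsNash s then 0 else 1) := by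
  by_cases hnash : G.IsNash s
  · rw [stepPMF_of_nash G s hnash, tsum_pure, if_pos hnash, add_zero]
  · obtain ⟨o, g, hg1, hg2, rfl⟩ := reach_cases G hG s hs hnash
    have hn : 2 ≤ n := hn2 hg1 hg2
    have hlt : g < n := by omega
    have hne : o ≠ o + ⟨g, hlt⟩ := by
      intro h
      have := congrArg (fun z : Fin n => ((z - o : Fin n) : ℕ)) h
      simp only [sub_self, add_sub_cancel_left, Fin.val_zero] at this
      omega
    rw [tsum_stepPMF G _ o (o + ⟨g, hlt⟩) hne (unsat_st G hG o g hg1 hg2 hlt),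
      update_at_o o g hg1 hg2, update_at_u o g hg1 hg2 hlt, if_neg hnash]
    rw [fN_st _ _ (by omega), fN_st _ _ (by omega), fN_st _ _ (by omega)]
    set A := (n - (g - 1)) * (g - 1) with hA
    set B := (n - (g + 1)) * (g + 1) with hB
    set C := (n - g) * g with hC
    have key : A + B + 2 = 2 * C := by
      obtain ⟨a, rfl⟩ : ∃ a, g = a + 1 := ⟨g - 1, by omega⟩
      obtain ⟨b, hb⟩ : ∃ b, n = a + 2 + b := ⟨n - (a + 2), by omega⟩
      subst hb
      have e1 : a + 1 - 1 = a := by omega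
      have e2 : a + 2 + b - (a + 1 - 1) = b + 2 := by omega
      have e3 : a + 2 + b - (a + 1 + 1) = b := by omega
      have e4 : a + 2 + b - (a + 1) = b + 1 := by omega
      rw [hA, hB, hC, e2, e3, e4, e1]
      ring
    have keyc : (A : ℝ≥0∞) + B + 2 = 2 * C := by exact_mod_cast key
    have h21 : (2 : ℝ≥0∞)⁻¹ * 2 = 1 := ENNReal.inv_mul_cancel two_ne_zero ENNReal.ofNat_ne_top
    calc (C : ℝ≥0∞) = 2⁻¹ * (2 * C) := by rw [← mul_assoc, h21, one_mul]
      _ = 2⁻¹ * ((A : ℝ≥0∞) + B + 2) := by rw [keyc]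
      _ = 2⁻¹ * A + 2⁻¹ * B + 2⁻¹ * 2 := by ring
      _ ≤ 2⁻¹ * A + 2⁻¹ * B + 1 := le_of_eq (by rw [h21])

lemma reach_step (G : CircleGame n) (hG : ∀ i, G.IsType3 i) (s s' : Fin n → Bool)
    (hs : Reach s) (h : s' ∈ (G.stepPMF s).support) : Reach s' := by
  by_cases hnash : G.IsNash s
  · rw [stepPMF_of_nash G s hnash, PMF.support_pure] at h
    rw [Set.mem_singleton_iff.mp h]
    exact hs
  · obtain ⟨o, g, hg1, hg2, rfl⟩ := reach_cases G hG s hs hnash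
    have hlt : g < n := by omega
    have hne' : (G.unsat (st o g)).Nonempty := by
      rw [unsat_st G hG o g hg1 hg2 hlt]; exact ⟨o, by simp⟩
    unfold stepPMF at h
    rw [dif_pos hne'] at h
    obtain ⟨i, hi, hmem⟩ := (PMF.mem_support_bind_iff _ _ _).mp h
    rw [PMF.support_pure, Set.mem_singleton_iff] at hmem
    rw [PMF.support_uniformOfFinset, unsat_st G hG o g hg1 hg2 hlt] at hi
    simp only [Finset.coe_insert, Finset.coe_singleton, Set.mem_insert_iff,
      Set.mem_singleton_iff] at hi
    rcases hi with h | h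
    · rw [h] at hmem
      rw [hmem, update_at_o o g hg1 hg2]
      exact ⟨o + 1, g - 1, by omega, rfl⟩
    · rw [h] at hmem
      rw [hmem, update_at_u o g hg1 hg2 hlt]
      exact ⟨o, g + 1, by omega, rfl⟩

lemma walk_reach (G : CircleGame n) (hG : ∀ i, G.IsType3 i) (s0 : Fin n → Bool)
    (hs0 : Reach s0) (t : ℕ) : ∀ s', G.walk s0 t s' ≠ 0 → Reach s' := by
  induction t with
  | zero =>
    intro s' h
    rw [walk, PMF.pure_apply] at h
    split at h
    · rwa [‹s' = s0›]
    · exact absurd rfl h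
  | succ t ih =>
    intro s' h
    rw [walk, PMF.bind_apply] at h
    rw [ne_eq, ENNReal.tsum_eq_zero] at h
    push_neg at h
    obtain ⟨s, hs⟩ := h
    rw [ne_eq, mul_eq_zero] at hs
    push_neg at hs
    exact reach_step G hG s s' (ih s hs.1) (by rw [PMF.mem_support_iff]; exact hs.2)

open scoped Classical in
/-- probability of not being at a Nash equilibrium after `t` steps. -/
noncomputable def pbad (G : CircleGame n) (s0 : Fin n → Bool) (t : ℕ) : ℝ≥0∞ :=
  ∑ s' ∈ Finset.univ.filter (fun s' => ¬ G.IsNash s'), G.walk s0 t s'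

/-- expected potential after `t` steps. -/
noncomputable def phi (G : CircleGame n) (s0 : Fin n → Bool) (t : ℕ) : ℝ≥0∞ :=
  ∑' s, G.walk s0 t s * fN s

lemma pbad_eq (G : CircleGame n) (s0 : Fin n → Bool) (t : ℕ) :
    pbad G s0 t = ∑' s, G.walk s0 t s * (if G.IsNash s then 0 else 1) := by
  classical
  rw [tsum_fintype, pbad]
  rw [Finset.sum_filter]
  refine Finset.sum_congr rfl fun s _ => ?_
  by_cases h : G.IsNash s <;> simp [h]

lemma expTime_eq (G : CircleGame n) (s0 : Fin n → Bool) :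
    G.expTime s0 = ∑' t, pbad G s0 t := by
  rfl

lemma phi_step (G : CircleGame n) (hG : ∀ i, G.IsType3 i) (s0 : Fin n → Bool)
    (hs0 : Reach s0) (t : ℕ) :
    phi G s0 t ≤ phi G s0 (t + 1) + pbad G s0 t := by
  rw [pbad_eq]
  rw [show phi G s0 (t+1) = ∑' s, G.walk s0 t s * ∑' s', G.stepPMF s s' * fN s' from
    tsum_bind _ _ _]
  rw [← ENNReal.tsum_add]
  refine ENNReal.tsum_le_tsum fun s => ?_
  rcases eq_or_ne (G.walk s0 t s) 0 with h0 | h0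
  · rw [h0, zero_mul]; exact zero_le
  · rw [← mul_add]
    exact mul_le_mul_right (drift G hG s (walk_reach G hG s0 hs0 t s h0)) _

lemma phi_telescope (G : CircleGame n) (hG : ∀ i, G.IsType3 i) (s0 : Fin n → Bool)
    (hs0 : Reach s0) (T : ℕ) :
    phi G s0 0 ≤ phi G s0 T + ∑ t ∈ Finset.range T, pbad G s0 t := by
  induction T with
  | zero => simp
  | succ T ih =>
    calc phi G s0 0 ≤ phi G s0 T + ∑ t ∈ Finset.range T, pbad G s0 t := ih
      _ ≤ (phi G s0 (T + 1) + pbad G s0 T) + ∑ t ∈ Finset.range T, pbad G s0 t :=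
          add_le_add_left (phi_step G hG s0 hs0 T) _
      _ = phi G s0 (T + 1) + ∑ t ∈ Finset.range (T + 1), pbad G s0 t := by
          rw [Finset.sum_range_succ]; ring

lemma phi_zero (G : CircleGame n) (s0 : Fin n → Bool) : phi G s0 0 = fN s0 := by
  rw [phi]
  simp only [walk]
  exact tsum_pure s0 _

lemma phi_le (G : CircleGame n) (hG : ∀ i, G.IsType3 i) (s0 : Fin n → Bool)
    (hs0 : Reach s0) (m : ℕ) (hn : n = m + m) (T : ℕ) :
    phi G s0 T ≤ (m * m : ℕ) * pbad G s0 T := by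
  rw [pbad_eq, ← ENNReal.tsum_mul_left]
  refine ENNReal.tsum_le_tsum fun s => ?_
  rcases eq_or_ne (G.walk s0 T s) 0 with h0 | h0
  · simp [h0]
  · by_cases h : G.IsNash s
    · rw [reach_nash_fN G hG s (walk_reach G hG s0 hs0 T s h0) h]
      simp
    · rw [if_neg h, mul_one, ← mul_comm (G.walk s0 T s)]
      exact mul_le_mul_right (by exact_mod_cast fN_le m hn s) _

end CirclePf

/-- There is a constant `c > 0` such that for every even `n ≥ 4` and every
circle game with `n` players, all of type 3, the expected number of steps of the random
best response dynamics started in the state where players `0, …, n/2 - 1` play their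
0-strategy and players `n/2, …, n-1` play their 1-strategy is at least `c·n^2`. -/
theorem circle_random_dynamics_lower_bound :
    ∃ c : ℝ≥0, 0 < c ∧
      ∀ (n : ℕ) [NeZero n], 4 ≤ n → Even n →
        ∀ G : CircleGame n, (∀ i, G.IsType3 i) →
          (c : ℝ≥0∞) * (n : ℝ≥0∞) ^ 2 ≤
            G.expTime (fun i => decide (n / 2 ≤ (i : ℕ))) := by
  classical
  refine ⟨8⁻¹, by norm_num, ?_⟩
  intro n _ hn4 heven G hG
  obtain ⟨m, hm⟩ := heven
  set s0 : Fin n → Bool := fun i => decide (n / 2 ≤ (i : ℕ)) with hs0def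
  have hs0 : s0 = CirclePf.st 0 (n / 2) := by
    funext i
    simp only [hs0def, CirclePf.st, sub_zero]
  have hreach : CirclePf.Reach s0 := ⟨0, n / 2, by omega, hs0⟩
  have hexp : G.expTime s0 = ∑' t, CirclePf.pbad G s0 t := rfl
  have hkey : ((8⁻¹ : ℝ≥0) : ℝ≥0∞) * ((n : ℕ) : ℝ≥0∞) ^ 2 = ((m * m : ℕ) : ℝ≥0∞) * 2⁻¹ := by
    have hc : ((8⁻¹ : ℝ≥0) : ℝ≥0∞) = (8 : ℝ≥0∞)⁻¹ := by
      rw [ENNReal.coe_inv (by norm_num)]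
      norm_num
    have h4i : (4 : ℝ≥0∞)⁻¹ * 4 = 1 := ENNReal.inv_mul_cancel (by norm_num) (by norm_num)
    have h8 : ((8 : ℝ≥0∞))⁻¹ = 4⁻¹ * 2⁻¹ := by
      rw [← ENNReal.mul_inv (Or.inl (by norm_num)) (Or.inl (by norm_num))]
      norm_num
    have hn2 : ((n : ℕ) : ℝ≥0∞) ^ 2 = 4 * ((m * m : ℕ) : ℝ≥0∞) := by
      rw [hm]; push_cast; ring
    rw [hc, h8, hn2]
    calc 4⁻¹ * 2⁻¹ * (4 * ((m * m : ℕ) : ℝ≥0∞))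
        = (4⁻¹ * 4) * (2⁻¹ * ((m * m : ℕ) : ℝ≥0∞)) := by ring
      _ = ((m * m : ℕ) : ℝ≥0∞) * 2⁻¹ := by rw [h4i, one_mul, mul_comm]
  by_cases hbig : ∀ T, (2⁻¹ : ℝ≥0∞) ≤ CirclePf.pbad G s0 T
  · have htop : (⊤ : ℝ≥0∞) ≤ G.expTime s0 := by
      rw [hexp]
      calc (⊤ : ℝ≥0∞) = ∑' _ : ℕ, (2⁻¹ : ℝ≥0∞) :=
            (ENNReal.tsum_const_eq_top_of_ne_zero (by norm_num)).symm
        _ ≤ _ := ENNReal.tsum_le_tsum hbig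
    exact le_top.trans htop
  · push_neg at hbig
    obtain ⟨T, hT⟩ := hbig
    have hfN0 : CirclePf.fN s0 = m * m := by
      rw [hs0, CirclePf.fN_st 0 (n / 2) (by omega)]
      have h2m : n / 2 = m := by omega
      rw [h2m]
      have h2m' : n - m = m := by omega
      rw [h2m']
    have h1 : ((m * m : ℕ) : ℝ≥0∞)
        ≤ CirclePf.phi G s0 T + ∑ t ∈ Finset.range T, CirclePf.pbad G s0 t := by
      calc ((m * m : ℕ) : ℝ≥0∞) = CirclePf.phi G s0 0 := by rw [CirclePf.phi_zero, hfN0]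
        _ ≤ _ := CirclePf.phi_telescope G hG s0 hreach T
    have h3 : CirclePf.phi G s0 T ≤ ((m * m : ℕ) : ℝ≥0∞) * 2⁻¹ :=
      (CirclePf.phi_le G hG s0 hreach m hm T).trans (mul_le_mul_right hT.le _)
    have h4 : ((m * m : ℕ) : ℝ≥0∞) ≤ ((m * m : ℕ) : ℝ≥0∞) * 2⁻¹ + G.expTime s0 :=
      h1.trans (add_le_add h3 (by rw [hexp]; exact ENNReal.sum_le_tsum _))
    have hfin : ((m * m : ℕ) : ℝ≥0∞) ≠ ⊤ := ENNReal.natCast_ne_top _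
    have hdiv : ((m * m : ℕ) : ℝ≥0∞) * 2⁻¹ = ((m * m : ℕ) : ℝ≥0∞) / 2 := by
      rw [div_eq_mul_inv]
    have h5 : ((m * m : ℕ) : ℝ≥0∞) - ((m * m : ℕ) : ℝ≥0∞) / 2 ≤ G.expTime s0 := by
      rw [← hdiv]
      exact tsub_le_iff_left.mpr h4
    rw [ENNReal.sub_half hfin] at h5
    calc ((8⁻¹ : ℝ≥0) : ℝ≥0∞) * ((n : ℕ) : ℝ≥0∞) ^ 2
        = ((m * m : ℕ) : ℝ≥0∞) * 2⁻¹ := hkey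
      _ = ((m * m : ℕ) : ℝ≥0∞) / 2 := hdiv
      _ ≤ G.expTime s0 := h5
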